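/- Let S be a finite set of nonnegative reals, f_i : S → [0,1] pmfs for i = 1,…,n, and π a permutation of {1,…,n}. Let C* be the optimum of the offline relaxation LP (maximize ∑_{i,x} x·f_i(x)·p_{ix} subject to ∑_{i,x} f_i(x)·p_{ix} ≤ 1, p_{ix} ∈ [0,1]). Then the optimum of the online IIF LP (maximize ∑_{i,x} x·f_i(x)·p(x) over p : S → [0,1] subject to p(x) + ∑_{k=1}^{n-1} ∑_{y∈S} f_{π(k)}(y)·p(y) ≤ 1 for all x ∈ S) is at least C*/2. -/

import Mathlib

open Finset

/-- The optimum of the online IIF LP is at least half the optimum `C*`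
of the offline relaxation LP (LP formulation of the IIF Diagonal Arc). -/
theorem stmt_5 (n : ℕ) (S : Finset ℝ) (hS : ∀ x ∈ S, 0 ≤ x)
    (f : Fin n → ℝ → ℝ)
    (hf01 : ∀ i, ∀ x ∈ S, 0 ≤ f i x ∧ f i x ≤ 1)
    (hfsum : ∀ i, ∑ x ∈ S, f i x = 1)
    (π : Equiv.Perm (Fin n))
    (pstar : Fin n → ℝ → ℝ)
    (hstar01 : ∀ i, ∀ x ∈ S, 0 ≤ pstar i x ∧ pstar i x ≤ 1)
    (hstarfeas : ∑ i : Fin n, ∑ x ∈ S, f i x * pstar i x ≤ 1)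
    (hstaropt : ∀ q : Fin n → ℝ → ℝ,
      (∀ i, ∀ x ∈ S, 0 ≤ q i x ∧ q i x ≤ 1) →
      (∑ i : Fin n, ∑ x ∈ S, f i x * q i x ≤ 1) →
      ∑ i : Fin n, ∑ x ∈ S, x * f i x * q i x ≤
        ∑ i : Fin n, ∑ x ∈ S, x * f i x * pstar i x)
    (Cstar : ℝ)
    (hC : Cstar = ∑ i : Fin n, ∑ x ∈ S, x * f i x * pstar i x) :
    ∃ p : ℝ → ℝ,
      (∀ x ∈ S, 0 ≤ p x ∧ p x ≤ 1) ∧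
      (∀ x ∈ S,
        p x + ∑ k ∈ Finset.univ.filter (fun k : Fin n => (k : ℕ) < n - 1),
          ∑ y ∈ S, f (π k) y * p y ≤ 1) ∧
      Cstar / 2 ≤ ∑ i : Fin n, ∑ x ∈ S, x * f i x * p x := by
  classical
  set F : ℝ → ℝ := fun x => ∑ i : Fin n, f i x with hF
  set g : ℝ → ℝ := fun x => ∑ i : Fin n, f i x * pstar i x with hg
  have hF0 : ∀ x ∈ S, 0 ≤ F x := fun x hx =>
    Finset.sum_nonneg fun i _ => (hf01 i x hx).1
  have hg0 : ∀ x ∈ S, 0 ≤ g x := fun x hx =>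
    Finset.sum_nonneg fun i _ => mul_nonneg (hf01 i x hx).1 (hstar01 i x hx).1
  have hgF : ∀ x ∈ S, g x ≤ F x := fun x hx =>
    Finset.sum_le_sum fun i _ =>
      mul_le_of_le_one_right (hf01 i x hx).1 (hstar01 i x hx).2
  set p : ℝ → ℝ := fun x => if F x = 0 then 0 else g x / (2 * F x) with hp
  have hgzero : ∀ x ∈ S, F x = 0 → g x = 0 := fun x hx h0 =>
    le_antisymm (h0 ▸ hgF x hx) (hg0 x hx)
  have key : ∀ x ∈ S, F x * p x = g x / 2 := by
    intro x hx
    by_cases h0 : F x = 0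
    · simp [hp, h0, hgzero x hx h0]
    · have : F x ≠ 0 := h0
      field_simp [hp, h0]
      simp only [hp, h0, if_false]
      field_simp
  have hp0 : ∀ x ∈ S, 0 ≤ p x := by
    intro x hx
    by_cases h0 : F x = 0
    · simp [hp, h0]
    · have hFpos : 0 < F x := lt_of_le_of_ne (hF0 x hx) (Ne.symm h0)
      simp only [hp, h0, if_false]
      exact div_nonneg (hg0 x hx) (by positivity)
  have hphalf : ∀ x ∈ S, p x ≤ 1 / 2 := by
    intro x hx
    by_cases h0 : F x = 0
    · simp [hp, h0]
    · have hFpos : 0 < F x := lt_of_le_of_ne (hF0 x hx) (Ne.symm h0)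
      simp only [hp, h0, if_false]
      rw [div_le_iff₀ (by positivity)]
      nlinarith [hgF x hx]
  -- sum of g over S is at most 1
  have hgsum : ∑ x ∈ S, g x ≤ 1 := by
    have := hstarfeas
    rwa [Finset.sum_comm] at this
  -- total online consumption
  have htot : ∑ i : Fin n, ∑ y ∈ S, f i y * p y ≤ 1 / 2 := by
    have : ∑ i : Fin n, ∑ y ∈ S, f i y * p y = ∑ y ∈ S, F y * p y := by
      rw [Finset.sum_comm]
      refine Finset.sum_congr rfl fun y hy => ?_
      simp [hF, Finset.sum_mul]
    rw [this]
    have : ∑ y ∈ S, F y * p y = (∑ y ∈ S, g y) / 2 := by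
      rw [Finset.sum_div]
      exact Finset.sum_congr rfl fun y hy => key y hy
    rw [this]
    linarith
  refine ⟨p, fun x hx => ⟨hp0 x hx, le_trans (hphalf x hx) (by norm_num)⟩, ?_, ?_⟩
  · intro x hx
    have hfilter : ∑ k ∈ Finset.univ.filter (fun k : Fin n => (k : ℕ) < n - 1),
        ∑ y ∈ S, f (π k) y * p y ≤ ∑ k : Fin n, ∑ y ∈ S, f (π k) y * p y := by
      refine Finset.sum_le_sum_of_subset_of_nonneg (Finset.filter_subset _ _)
        fun k _ _ => Finset.sum_nonneg fun y hy =>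
          mul_nonneg (hf01 (π k) y hy).1 (hp0 y hy)
    have hperm : ∑ k : Fin n, ∑ y ∈ S, f (π k) y * p y
        = ∑ i : Fin n, ∑ y ∈ S, f i y * p y :=
      Equiv.sum_comp π (fun i => ∑ y ∈ S, f i y * p y)
    have := hphalf x hx
    linarith [hfilter, hperm ▸ htot]
  · have hobj : ∑ i : Fin n, ∑ x ∈ S, x * f i x * p x = Cstar / 2 := by
      rw [Finset.sum_comm, hC, Finset.sum_comm (s := Finset.univ)]
      rw [Finset.sum_div]
      refine Finset.sum_congr rfl fun x hx => ?_
      have : ∑ i : Fin n, x * f i x * p x = x * (F x * p x) := by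
        simp only [hF, Finset.sum_mul, Finset.mul_sum]
        exact Finset.sum_congr rfl fun i _ => by ring
      rw [this, key x hx]
      have : ∑ i : Fin n, x * f i x * pstar i x = x * g x := by
        simp only [hg, Finset.mul_sum]
        exact Finset.sum_congr rfl fun i _ => by ring
      rw [this]
      ring
    rw [hobj]
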